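/- arXiv:math/0408434 — 5 statements merged into one kernel-verified Lean document; each statement's English description precedes it below -/
import Mathlib

section
/- With u the self-adjoint unitary permutation matrix with nonzero entries at positions (1,1),(2,4),(3,3),(4,2), the subalgebras D_{12} = u(M_2⊗I_2)u and D_{13} = I_2⊗M_2 of M_4(ℂ) ≅ M_2(ℂ)⊗M_2(ℂ) satisfy: M_4(ℂ) is the linear span of products AB with A ∈ D_{12}, B ∈ D_{13}. -/
open Matrix

noncomputable section

/-- Identification `M₂(ℂ) ⊗ M₂(ℂ) ≅ M₄(ℂ)`: the Kronecker (block) tensor product,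
with index `(i₁,i₂) ↦ 2·i₁+i₂`. -/
def tens (a b : Matrix (Fin 2) (Fin 2) ℂ) : Matrix (Fin 4) (Fin 4) ℂ :=
  Matrix.reindex finProdFinEquiv finProdFinEquiv (Matrix.kroneckerMap (· * ·) a b)

/-- The permutation matrix with 1's at positions (1,1),(2,4),(3,3),(4,2). -/
def uMat : Matrix (Fin 4) (Fin 4) ℂ := !![1,0,0,0; 0,0,0,1; 0,0,1,0; 0,1,0,0]

/-- The permutation matrix with 1's at positions (1,1),(2,2),(3,4),(4,3). -/
def vMat : Matrix (Fin 4) (Fin 4) ℂ := !![1,0,0,0; 0,1,0,0; 0,0,0,1; 0,0,1,0]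

/-- `e_u(i,j) = u (e(i,j) ⊗ I₂) u`. -/
def eU (i j : Fin 2) : Matrix (Fin 4) (Fin 4) ℂ :=
  uMat * tens (Matrix.single i j 1) 1 * uMat

/-- `e_v(i,j) = v (e(i,j) ⊗ I₂) v`. -/
def eV (i j : Fin 2) : Matrix (Fin 4) (Fin 4) ℂ :=
  vMat * tens (Matrix.single i j 1) 1 * vMat

/-- `e_0(i,j) = I₂ ⊗ e(i,j)`. -/
def e0 (i j : Fin 2) : Matrix (Fin 4) (Fin 4) ℂ :=
  tens 1 (Matrix.single i j 1)

end

lemma tens_eq (a b : Matrix (Fin 2) (Fin 2) ℂ) : tens a b =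
    !![a 0 0*b 0 0, a 0 0*b 0 1, a 0 1*b 0 0, a 0 1*b 0 1;
       a 0 0*b 1 0, a 0 0*b 1 1, a 0 1*b 1 0, a 0 1*b 1 1;
       a 1 0*b 0 0, a 1 0*b 0 1, a 1 1*b 0 0, a 1 1*b 0 1;
       a 1 0*b 1 0, a 1 0*b 1 1, a 1 1*b 1 0, a 1 1*b 1 1] := by
  ext r c; fin_cases r <;> fin_cases c <;> rfl

theorem mul_fin_four {α : Type*} [AddCommMonoid α] [Mul α]
    (a00 a01 a02 a03 a10 a11 a12 a13 a20 a21 a22 a23 a30 a31 a32 a33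
     b00 b01 b02 b03 b10 b11 b12 b13 b20 b21 b22 b23 b30 b31 b32 b33 : α) :
    !![a00, a01, a02, a03; a10, a11, a12, a13; a20, a21, a22, a23; a30, a31, a32, a33] *
      !![b00, b01, b02, b03; b10, b11, b12, b13; b20, b21, b22, b23; b30, b31, b32, b33] =
    !![a00*b00+a01*b10+a02*b20+a03*b30, a00*b01+a01*b11+a02*b21+a03*b31,
         a00*b02+a01*b12+a02*b22+a03*b32, a00*b03+a01*b13+a02*b23+a03*b33;
       a10*b00+a11*b10+a12*b20+a13*b30, a10*b01+a11*b11+a12*b21+a13*b31,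
         a10*b02+a11*b12+a12*b22+a13*b32, a10*b03+a11*b13+a12*b23+a13*b33;
       a20*b00+a21*b10+a22*b20+a23*b30, a20*b01+a21*b11+a22*b21+a23*b31,
         a20*b02+a21*b12+a22*b22+a23*b32, a20*b03+a21*b13+a22*b23+a23*b33;
       a30*b00+a31*b10+a32*b20+a33*b30, a30*b01+a31*b11+a32*b21+a33*b31,
         a30*b02+a31*b12+a32*b22+a33*b32, a30*b03+a31*b13+a32*b23+a33*b33] := by
  ext i j
  fin_cases i <;> fin_cases j <;>
    simp [Matrix.mul_apply, Fin.sum_univ_four, Matrix.vecHead, Matrix.vecTail, add_assoc]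

lemma prod_eq_00 : Matrix.single (0:Fin 4) (0:Fin 4) (1:ℂ) =
    (uMat * tens !![1,0; 0,0] 1 * uMat) * tens 1 !![1,0; 0,0] := by
  have h : Matrix.single (0:Fin 4) (0:Fin 4) (1:ℂ) = !![1,0,0,0; 0,0,0,0; 0,0,0,0; 0,0,0,0] := by
    ext r c; fin_cases r <;> fin_cases c <;> rfl
  rw [h]
  simp only [Matrix.one_fin_two, tens_eq]
  norm_num [uMat, mul_fin_four]
  funext i
  fin_cases i <;> simp [Matrix.cons_eq_zero_iff]

lemma prod_eq_01 : Matrix.single (0:Fin 4) (1:Fin 4) (1:ℂ) =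
    (uMat * tens !![1,0; 0,0] 1 * uMat) * tens 1 !![0,1; 0,0] := by
  have h : Matrix.single (0:Fin 4) (1:Fin 4) (1:ℂ) = !![0,1,0,0; 0,0,0,0; 0,0,0,0; 0,0,0,0] := by
    ext r c; fin_cases r <;> fin_cases c <;> rfl
  rw [h]
  simp only [Matrix.one_fin_two, tens_eq]
  norm_num [uMat, mul_fin_four]
  funext i
  fin_cases i <;> simp [Matrix.cons_eq_zero_iff]

lemma prod_eq_02 : Matrix.single (0:Fin 4) (2:Fin 4) (1:ℂ) =
    (uMat * tens !![0,1; 0,0] 1 * uMat) * tens 1 !![1,0; 0,0] := by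
  have h : Matrix.single (0:Fin 4) (2:Fin 4) (1:ℂ) = !![0,0,1,0; 0,0,0,0; 0,0,0,0; 0,0,0,0] := by
    ext r c; fin_cases r <;> fin_cases c <;> rfl
  rw [h]
  simp only [Matrix.one_fin_two, tens_eq]
  norm_num [uMat, mul_fin_four]
  funext i
  fin_cases i <;> simp [Matrix.cons_eq_zero_iff]

lemma prod_eq_03 : Matrix.single (0:Fin 4) (3:Fin 4) (1:ℂ) =
    (uMat * tens !![0,1; 0,0] 1 * uMat) * tens 1 !![0,1; 0,0] := by
  have h : Matrix.single (0:Fin 4) (3:Fin 4) (1:ℂ) = !![0,0,0,1; 0,0,0,0; 0,0,0,0; 0,0,0,0] := by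
    ext r c; fin_cases r <;> fin_cases c <;> rfl
  rw [h]
  simp only [Matrix.one_fin_two, tens_eq]
  norm_num [uMat, mul_fin_four]
  funext i
  fin_cases i <;> simp [Matrix.cons_eq_zero_iff]

lemma prod_eq_10 : Matrix.single (1:Fin 4) (0:Fin 4) (1:ℂ) =
    (uMat * tens !![0,0; 0,1] 1 * uMat) * tens 1 !![0,0; 1,0] := by
  have h : Matrix.single (1:Fin 4) (0:Fin 4) (1:ℂ) = !![0,0,0,0; 1,0,0,0; 0,0,0,0; 0,0,0,0] := by
    ext r c; fin_cases r <;> fin_cases c <;> rfl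
  rw [h]
  simp only [Matrix.one_fin_two, tens_eq]
  norm_num [uMat, mul_fin_four]
  funext i
  fin_cases i <;> simp [Matrix.cons_eq_zero_iff]

lemma prod_eq_11 : Matrix.single (1:Fin 4) (1:Fin 4) (1:ℂ) =
    (uMat * tens !![0,0; 0,1] 1 * uMat) * tens 1 !![0,0; 0,1] := by
  have h : Matrix.single (1:Fin 4) (1:Fin 4) (1:ℂ) = !![0,0,0,0; 0,1,0,0; 0,0,0,0; 0,0,0,0] := by
    ext r c; fin_cases r <;> fin_cases c <;> rfl
  rw [h]
  simp only [Matrix.one_fin_two, tens_eq]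
  norm_num [uMat, mul_fin_four]
  funext i
  fin_cases i <;> simp [Matrix.cons_eq_zero_iff]

lemma prod_eq_12 : Matrix.single (1:Fin 4) (2:Fin 4) (1:ℂ) =
    (uMat * tens !![0,0; 1,0] 1 * uMat) * tens 1 !![0,0; 1,0] := by
  have h : Matrix.single (1:Fin 4) (2:Fin 4) (1:ℂ) = !![0,0,0,0; 0,0,1,0; 0,0,0,0; 0,0,0,0] := by
    ext r c; fin_cases r <;> fin_cases c <;> rfl
  rw [h]
  simp only [Matrix.one_fin_two, tens_eq]
  norm_num [uMat, mul_fin_four]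
  funext i
  fin_cases i <;> simp [Matrix.cons_eq_zero_iff]

lemma prod_eq_13 : Matrix.single (1:Fin 4) (3:Fin 4) (1:ℂ) =
    (uMat * tens !![0,0; 1,0] 1 * uMat) * tens 1 !![0,0; 0,1] := by
  have h : Matrix.single (1:Fin 4) (3:Fin 4) (1:ℂ) = !![0,0,0,0; 0,0,0,1; 0,0,0,0; 0,0,0,0] := by
    ext r c; fin_cases r <;> fin_cases c <;> rfl
  rw [h]
  simp only [Matrix.one_fin_two, tens_eq]
  norm_num [uMat, mul_fin_four]
  funext i
  fin_cases i <;> simp [Matrix.cons_eq_zero_iff]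

lemma prod_eq_20 : Matrix.single (2:Fin 4) (0:Fin 4) (1:ℂ) =
    (uMat * tens !![0,0; 1,0] 1 * uMat) * tens 1 !![1,0; 0,0] := by
  have h : Matrix.single (2:Fin 4) (0:Fin 4) (1:ℂ) = !![0,0,0,0; 0,0,0,0; 1,0,0,0; 0,0,0,0] := by
    ext r c; fin_cases r <;> fin_cases c <;> rfl
  rw [h]
  simp only [Matrix.one_fin_two, tens_eq]
  norm_num [uMat, mul_fin_four]
  funext i
  fin_cases i <;> simp [Matrix.cons_eq_zero_iff]

lemma prod_eq_21 : Matrix.single (2:Fin 4) (1:Fin 4) (1:ℂ) =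
    (uMat * tens !![0,0; 1,0] 1 * uMat) * tens 1 !![0,1; 0,0] := by
  have h : Matrix.single (2:Fin 4) (1:Fin 4) (1:ℂ) = !![0,0,0,0; 0,0,0,0; 0,1,0,0; 0,0,0,0] := by
    ext r c; fin_cases r <;> fin_cases c <;> rfl
  rw [h]
  simp only [Matrix.one_fin_two, tens_eq]
  norm_num [uMat, mul_fin_four]
  funext i
  fin_cases i <;> simp [Matrix.cons_eq_zero_iff]

lemma prod_eq_22 : Matrix.single (2:Fin 4) (2:Fin 4) (1:ℂ) =
    (uMat * tens !![0,0; 0,1] 1 * uMat) * tens 1 !![1,0; 0,0] := by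
  have h : Matrix.single (2:Fin 4) (2:Fin 4) (1:ℂ) = !![0,0,0,0; 0,0,0,0; 0,0,1,0; 0,0,0,0] := by
    ext r c; fin_cases r <;> fin_cases c <;> rfl
  rw [h]
  simp only [Matrix.one_fin_two, tens_eq]
  norm_num [uMat, mul_fin_four]
  funext i
  fin_cases i <;> simp [Matrix.cons_eq_zero_iff]

lemma prod_eq_23 : Matrix.single (2:Fin 4) (3:Fin 4) (1:ℂ) =
    (uMat * tens !![0,0; 0,1] 1 * uMat) * tens 1 !![0,1; 0,0] := by
  have h : Matrix.single (2:Fin 4) (3:Fin 4) (1:ℂ) = !![0,0,0,0; 0,0,0,0; 0,0,0,1; 0,0,0,0] := by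
    ext r c; fin_cases r <;> fin_cases c <;> rfl
  rw [h]
  simp only [Matrix.one_fin_two, tens_eq]
  norm_num [uMat, mul_fin_four]
  funext i
  fin_cases i <;> simp [Matrix.cons_eq_zero_iff]

lemma prod_eq_30 : Matrix.single (3:Fin 4) (0:Fin 4) (1:ℂ) =
    (uMat * tens !![0,1; 0,0] 1 * uMat) * tens 1 !![0,0; 1,0] := by
  have h : Matrix.single (3:Fin 4) (0:Fin 4) (1:ℂ) = !![0,0,0,0; 0,0,0,0; 0,0,0,0; 1,0,0,0] := by
    ext r c; fin_cases r <;> fin_cases c <;> rfl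
  rw [h]
  simp only [Matrix.one_fin_two, tens_eq]
  norm_num [uMat, mul_fin_four]
  funext i
  fin_cases i <;> simp [Matrix.cons_eq_zero_iff]

lemma prod_eq_31 : Matrix.single (3:Fin 4) (1:Fin 4) (1:ℂ) =
    (uMat * tens !![0,1; 0,0] 1 * uMat) * tens 1 !![0,0; 0,1] := by
  have h : Matrix.single (3:Fin 4) (1:Fin 4) (1:ℂ) = !![0,0,0,0; 0,0,0,0; 0,0,0,0; 0,1,0,0] := by
    ext r c; fin_cases r <;> fin_cases c <;> rfl
  rw [h]
  simp only [Matrix.one_fin_two, tens_eq]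
  norm_num [uMat, mul_fin_four]
  funext i
  fin_cases i <;> simp [Matrix.cons_eq_zero_iff]

lemma prod_eq_32 : Matrix.single (3:Fin 4) (2:Fin 4) (1:ℂ) =
    (uMat * tens !![1,0; 0,0] 1 * uMat) * tens 1 !![0,0; 1,0] := by
  have h : Matrix.single (3:Fin 4) (2:Fin 4) (1:ℂ) = !![0,0,0,0; 0,0,0,0; 0,0,0,0; 0,0,1,0] := by
    ext r c; fin_cases r <;> fin_cases c <;> rfl
  rw [h]
  simp only [Matrix.one_fin_two, tens_eq]
  norm_num [uMat, mul_fin_four]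
  funext i
  fin_cases i <;> simp [Matrix.cons_eq_zero_iff]

lemma prod_eq_33 : Matrix.single (3:Fin 4) (3:Fin 4) (1:ℂ) =
    (uMat * tens !![1,0; 0,0] 1 * uMat) * tens 1 !![0,0; 0,1] := by
  have h : Matrix.single (3:Fin 4) (3:Fin 4) (1:ℂ) = !![0,0,0,0; 0,0,0,0; 0,0,0,0; 0,0,0,1] := by
    ext r c; fin_cases r <;> fin_cases c <;> rfl
  rw [h]
  simp only [Matrix.one_fin_two, tens_eq]
  norm_num [uMat, mul_fin_four]
  funext i
  fin_cases i <;> simp [Matrix.cons_eq_zero_iff]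

lemma std_mem (p q : Fin 4) :
    Matrix.single p q (1:ℂ) ∈ Submodule.span ℂ
      {m : Matrix (Fin 4) (Fin 4) ℂ |
        ∃ a b : Matrix (Fin 2) (Fin 2) ℂ,
          m = (uMat * tens a 1 * uMat) * tens 1 b} := by
  fin_cases p <;> fin_cases q
  · exact Submodule.subset_span ⟨_, _, prod_eq_00⟩
  · exact Submodule.subset_span ⟨_, _, prod_eq_01⟩
  · exact Submodule.subset_span ⟨_, _, prod_eq_02⟩
  · exact Submodule.subset_span ⟨_, _, prod_eq_03⟩
  · exact Submodule.subset_span ⟨_, _, prod_eq_10⟩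
  · exact Submodule.subset_span ⟨_, _, prod_eq_11⟩
  · exact Submodule.subset_span ⟨_, _, prod_eq_12⟩
  · exact Submodule.subset_span ⟨_, _, prod_eq_13⟩
  · exact Submodule.subset_span ⟨_, _, prod_eq_20⟩
  · exact Submodule.subset_span ⟨_, _, prod_eq_21⟩
  · exact Submodule.subset_span ⟨_, _, prod_eq_22⟩
  · exact Submodule.subset_span ⟨_, _, prod_eq_23⟩
  · exact Submodule.subset_span ⟨_, _, prod_eq_30⟩
  · exact Submodule.subset_span ⟨_, _, prod_eq_31⟩
  · exact Submodule.subset_span ⟨_, _, prod_eq_32⟩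
  · exact Submodule.subset_span ⟨_, _, prod_eq_33⟩

/-- `M₄(ℂ)` is the linear span of the products `AB` with
`A ∈ D₁₂ = u(M₂⊗I₂)u` and `B ∈ D₁₃ = I₂⊗M₂`. -/
theorem stmt2 :
    Submodule.span ℂ
      {m : Matrix (Fin 4) (Fin 4) ℂ |
        ∃ a b : Matrix (Fin 2) (Fin 2) ℂ,
          m = (uMat * tens a 1 * uMat) * tens 1 b} = ⊤ := by
  rw [eq_top_iff]
  rintro x -
  rw [Matrix.matrix_eq_sum_single x]
  refine Submodule.sum_mem _ fun p _ => Submodule.sum_mem _ fun q _ => ?_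
  have h : Matrix.single p q (x p q) = x p q • Matrix.single p q (1:ℂ) := by
    rw [Matrix.smul_single, smul_eq_mul, mul_one]
  rw [h]
  exact Submodule.smul_mem _ _ (std_mem p q)
end

section
/- With u and v as above, M_4(ℂ) equals the linear span of the products AB with A ∈ D_{12} = u(M_2⊗I_2)u and B ∈ D_{23} = v(M_2⊗I_2)v. -/
open Matrix

lemma tens_one_eq (a : Matrix (Fin 2) (Fin 2) ℂ) :
    tens a 1 = !![a 0 0, 0, a 0 1, 0; 0, a 0 0, 0, a 0 1;
                  a 1 0, 0, a 1 1, 0; 0, a 1 0, 0, a 1 1] := by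
  have h0 : finProdFinEquiv.symm (0 : Fin (2*2)) = ((0,0) : Fin 2 × Fin 2) := by decide
  have h1 : finProdFinEquiv.symm (1 : Fin (2*2)) = ((0,1) : Fin 2 × Fin 2) := by decide
  have h2 : finProdFinEquiv.symm (2 : Fin (2*2)) = ((1,0) : Fin 2 × Fin 2) := by decide
  have h3 : finProdFinEquiv.symm (3 : Fin (2*2)) = ((1,1) : Fin 2 × Fin 2) := by decide
  ext i j
  fin_cases i <;> fin_cases j <;>
    simp [tens, Matrix.reindex_apply, Matrix.submatrix_apply, Matrix.one_apply,
      h0, h1, h2, h3]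

lemma auxP00 : Matrix.single (0:Fin 4) (0:Fin 4) (1:ℂ) =
    (uMat * tens (Matrix.single 0 0 1) 1 * uMat) *
    (vMat * tens (Matrix.single 0 0 1) 1 * vMat) := by
  simp only [tens_one_eq]
  ext a b
  fin_cases a <;> fin_cases b <;>
    simp [uMat, vMat, Matrix.mul_apply, Fin.sum_univ_four, Matrix.single,
      Matrix.vecHead, Matrix.vecTail]

lemma auxP01 : Matrix.single (0:Fin 4) (1:Fin 4) (1:ℂ) =
    (uMat * tens (Matrix.single 0 1 1) 1 * uMat) *
    (vMat * tens (Matrix.single 1 0 1) 1 * vMat) := by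
  simp only [tens_one_eq]
  ext a b
  fin_cases a <;> fin_cases b <;>
    simp [uMat, vMat, Matrix.mul_apply, Fin.sum_univ_four, Matrix.single,
      Matrix.vecHead, Matrix.vecTail]

lemma auxP02 : Matrix.single (0:Fin 4) (2:Fin 4) (1:ℂ) =
    (uMat * tens (Matrix.single 0 1 1) 1 * uMat) *
    (vMat * tens (Matrix.single 1 1 1) 1 * vMat) := by
  simp only [tens_one_eq]
  ext a b
  fin_cases a <;> fin_cases b <;>
    simp [uMat, vMat, Matrix.mul_apply, Fin.sum_univ_four, Matrix.single,
      Matrix.vecHead, Matrix.vecTail]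

lemma auxP03 : Matrix.single (0:Fin 4) (3:Fin 4) (1:ℂ) =
    (uMat * tens (Matrix.single 0 0 1) 1 * uMat) *
    (vMat * tens (Matrix.single 0 1 1) 1 * vMat) := by
  simp only [tens_one_eq]
  ext a b
  fin_cases a <;> fin_cases b <;>
    simp [uMat, vMat, Matrix.mul_apply, Fin.sum_univ_four, Matrix.single,
      Matrix.vecHead, Matrix.vecTail]

lemma auxP10 : Matrix.single (1:Fin 4) (0:Fin 4) (1:ℂ) =
    (uMat * tens (Matrix.single 1 0 1) 1 * uMat) *
    (vMat * tens (Matrix.single 1 0 1) 1 * vMat) := by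
  simp only [tens_one_eq]
  ext a b
  fin_cases a <;> fin_cases b <;>
    simp [uMat, vMat, Matrix.mul_apply, Fin.sum_univ_four, Matrix.single,
      Matrix.vecHead, Matrix.vecTail]

lemma auxP11 : Matrix.single (1:Fin 4) (1:Fin 4) (1:ℂ) =
    (uMat * tens (Matrix.single 1 1 1) 1 * uMat) *
    (vMat * tens (Matrix.single 0 0 1) 1 * vMat) := by
  simp only [tens_one_eq]
  ext a b
  fin_cases a <;> fin_cases b <;>
    simp [uMat, vMat, Matrix.mul_apply, Fin.sum_univ_four, Matrix.single,
      Matrix.vecHead, Matrix.vecTail]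

lemma auxP12 : Matrix.single (1:Fin 4) (2:Fin 4) (1:ℂ) =
    (uMat * tens (Matrix.single 1 1 1) 1 * uMat) *
    (vMat * tens (Matrix.single 0 1 1) 1 * vMat) := by
  simp only [tens_one_eq]
  ext a b
  fin_cases a <;> fin_cases b <;>
    simp [uMat, vMat, Matrix.mul_apply, Fin.sum_univ_four, Matrix.single,
      Matrix.vecHead, Matrix.vecTail]

lemma auxP13 : Matrix.single (1:Fin 4) (3:Fin 4) (1:ℂ) =
    (uMat * tens (Matrix.single 1 0 1) 1 * uMat) *
    (vMat * tens (Matrix.single 1 1 1) 1 * vMat) := by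
  simp only [tens_one_eq]
  ext a b
  fin_cases a <;> fin_cases b <;>
    simp [uMat, vMat, Matrix.mul_apply, Fin.sum_univ_four, Matrix.single,
      Matrix.vecHead, Matrix.vecTail]

lemma auxP20 : Matrix.single (2:Fin 4) (0:Fin 4) (1:ℂ) =
    (uMat * tens (Matrix.single 1 0 1) 1 * uMat) *
    (vMat * tens (Matrix.single 0 0 1) 1 * vMat) := by
  simp only [tens_one_eq]
  ext a b
  fin_cases a <;> fin_cases b <;>
    simp [uMat, vMat, Matrix.mul_apply, Fin.sum_univ_four, Matrix.single,
      Matrix.vecHead, Matrix.vecTail]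

lemma auxP21 : Matrix.single (2:Fin 4) (1:Fin 4) (1:ℂ) =
    (uMat * tens (Matrix.single 1 1 1) 1 * uMat) *
    (vMat * tens (Matrix.single 1 0 1) 1 * vMat) := by
  simp only [tens_one_eq]
  ext a b
  fin_cases a <;> fin_cases b <;>
    simp [uMat, vMat, Matrix.mul_apply, Fin.sum_univ_four, Matrix.single,
      Matrix.vecHead, Matrix.vecTail]

lemma auxP22 : Matrix.single (2:Fin 4) (2:Fin 4) (1:ℂ) =
    (uMat * tens (Matrix.single 1 1 1) 1 * uMat) *
    (vMat * tens (Matrix.single 1 1 1) 1 * vMat) := by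
  simp only [tens_one_eq]
  ext a b
  fin_cases a <;> fin_cases b <;>
    simp [uMat, vMat, Matrix.mul_apply, Fin.sum_univ_four, Matrix.single,
      Matrix.vecHead, Matrix.vecTail]

lemma auxP23 : Matrix.single (2:Fin 4) (3:Fin 4) (1:ℂ) =
    (uMat * tens (Matrix.single 1 0 1) 1 * uMat) *
    (vMat * tens (Matrix.single 0 1 1) 1 * vMat) := by
  simp only [tens_one_eq]
  ext a b
  fin_cases a <;> fin_cases b <;>
    simp [uMat, vMat, Matrix.mul_apply, Fin.sum_univ_four, Matrix.single,
      Matrix.vecHead, Matrix.vecTail]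

lemma auxP30 : Matrix.single (3:Fin 4) (0:Fin 4) (1:ℂ) =
    (uMat * tens (Matrix.single 0 0 1) 1 * uMat) *
    (vMat * tens (Matrix.single 1 0 1) 1 * vMat) := by
  simp only [tens_one_eq]
  ext a b
  fin_cases a <;> fin_cases b <;>
    simp [uMat, vMat, Matrix.mul_apply, Fin.sum_univ_four, Matrix.single,
      Matrix.vecHead, Matrix.vecTail]

lemma auxP31 : Matrix.single (3:Fin 4) (1:Fin 4) (1:ℂ) =
    (uMat * tens (Matrix.single 0 1 1) 1 * uMat) *
    (vMat * tens (Matrix.single 0 0 1) 1 * vMat) := by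
  simp only [tens_one_eq]
  ext a b
  fin_cases a <;> fin_cases b <;>
    simp [uMat, vMat, Matrix.mul_apply, Fin.sum_univ_four, Matrix.single,
      Matrix.vecHead, Matrix.vecTail]

lemma auxP32 : Matrix.single (3:Fin 4) (2:Fin 4) (1:ℂ) =
    (uMat * tens (Matrix.single 0 1 1) 1 * uMat) *
    (vMat * tens (Matrix.single 0 1 1) 1 * vMat) := by
  simp only [tens_one_eq]
  ext a b
  fin_cases a <;> fin_cases b <;>
    simp [uMat, vMat, Matrix.mul_apply, Fin.sum_univ_four, Matrix.single,
      Matrix.vecHead, Matrix.vecTail]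

lemma auxP33 : Matrix.single (3:Fin 4) (3:Fin 4) (1:ℂ) =
    (uMat * tens (Matrix.single 0 0 1) 1 * uMat) *
    (vMat * tens (Matrix.single 1 1 1) 1 * vMat) := by
  simp only [tens_one_eq]
  ext a b
  fin_cases a <;> fin_cases b <;>
    simp [uMat, vMat, Matrix.mul_apply, Fin.sum_univ_four, Matrix.single,
      Matrix.vecHead, Matrix.vecTail]

/-- `M₄(ℂ)` is the linear span of the products `AB` with
`A ∈ D₁₂ = u(M₂⊗I₂)u` and `B ∈ D₂₃ = v(M₂⊗I₂)v`. -/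
theorem stmt4 :
    Submodule.span ℂ
      {m : Matrix (Fin 4) (Fin 4) ℂ |
        ∃ a b : Matrix (Fin 2) (Fin 2) ℂ,
          m = (uMat * tens a 1 * uMat) * (vMat * tens b 1 * vMat)} = ⊤ := by
  rw [eq_top_iff]
  intro m _
  rw [Matrix.matrix_eq_sum_single m]
  refine Submodule.sum_mem _ fun p _ => Submodule.sum_mem _ fun q _ => ?_
  have hsm : Matrix.single p q (m p q) = m p q • Matrix.single p q (1:ℂ) := by
    ext a b
    simp [Matrix.single]
  rw [hsm]
  refine Submodule.smul_mem _ _ (Submodule.subset_span ?_)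
  fin_cases p <;> fin_cases q
  · exact ⟨_, _, auxP00⟩
  · exact ⟨_, _, auxP01⟩
  · exact ⟨_, _, auxP02⟩
  · exact ⟨_, _, auxP03⟩
  · exact ⟨_, _, auxP10⟩
  · exact ⟨_, _, auxP11⟩
  · exact ⟨_, _, auxP12⟩
  · exact ⟨_, _, auxP13⟩
  · exact ⟨_, _, auxP20⟩
  · exact ⟨_, _, auxP21⟩
  · exact ⟨_, _, auxP22⟩
  · exact ⟨_, _, auxP23⟩
  · exact ⟨_, _, auxP30⟩
  · exact ⟨_, _, auxP31⟩
  · exact ⟨_, _, auxP32⟩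
  · exact ⟨_, _, auxP33⟩
end

section
/- The 16 products e_u(i,j)·e_v(k,l), for i,j,k,l ∈ {1,2}, form a linear basis of M_4(ℂ), and there is a bijection between {e_u(i,j)e_v(k,l)} and the standard matrix units {e_4(α,β) : 1 ≤ α,β ≤ 4} of M_4(ℂ). -/
open Matrix

namespace Stmt7Aux

set_option maxHeartbeats 2000000

lemma val3 : ((3 : Fin (2*2)) : ℕ) = 3 := rfl

lemma val3' : ((3 : Fin 4) : ℕ) = 3 := rfl

/-- Explicit form of `e(i,j) ⊗ I₂`. -/
lemma tens_ex (i j : Fin 2) :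
    tens (Matrix.single i j 1) 1 =
      ![![!![1,0,0,0; 0,1,0,0; 0,0,0,0; 0,0,0,0],
         !![0,0,1,0; 0,0,0,1; 0,0,0,0; 0,0,0,0]],
        ![!![0,0,0,0; 0,0,0,0; 1,0,0,0; 0,1,0,0],
         !![0,0,0,0; 0,0,0,0; 0,0,1,0; 0,0,0,1]]] i j := by
  fin_cases i <;> fin_cases j <;>
    · ext a b
      fin_cases a <;> fin_cases b <;>
        simp [tens, Matrix.kroneckerMap, finProdFinEquiv, Fin.divNat, Fin.modNat,
          Matrix.single, Matrix.one_apply, Fin.ext_iff, val3,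
          Matrix.vecHead, Matrix.vecTail]

/-- Explicit form of `eU i j`. -/
lemma eU_ex (i j : Fin 2) :
    eU i j =
      ![![!![1,0,0,0; 0,0,0,0; 0,0,0,0; 0,0,0,1],
         !![0,0,1,0; 0,0,0,0; 0,0,0,0; 0,1,0,0]],
        ![!![0,0,0,0; 0,0,0,1; 1,0,0,0; 0,0,0,0],
         !![0,0,0,0; 0,1,0,0; 0,0,1,0; 0,0,0,0]]] i j := by
  fin_cases i <;> fin_cases j <;>
    · rw [eU, tens_ex]
      ext a b
      fin_cases a <;> fin_cases b <;>
        simp [uMat, Matrix.mul_apply, Fin.sum_univ_four, Matrix.vecHead, Matrix.vecTail]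

/-- Explicit form of `eV i j`. -/
lemma eV_ex (i j : Fin 2) :
    eV i j =
      ![![!![1,0,0,0; 0,1,0,0; 0,0,0,0; 0,0,0,0],
         !![0,0,0,1; 0,0,1,0; 0,0,0,0; 0,0,0,0]],
        ![!![0,0,0,0; 0,0,0,0; 0,1,0,0; 1,0,0,0],
         !![0,0,0,0; 0,0,0,0; 0,0,1,0; 0,0,0,1]]] i j := by
  fin_cases i <;> fin_cases j <;>
    · rw [eV, tens_ex]
      ext a b
      fin_cases a <;> fin_cases b <;>
        simp [vMat, Matrix.mul_apply, Fin.sum_univ_four, Matrix.vecHead, Matrix.vecTail]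

/-- The bijection on index sets. -/
def g : (Fin 2 × Fin 2) × Fin 2 × Fin 2 → Fin 4 × Fin 4 := fun p =>
  (![![![![(0,0),(0,3)], ![(3,0),(3,3)]], ![![(3,1),(3,2)], ![(0,1),(0,2)]]],
    ![![![(2,0),(2,3)], ![(1,0),(1,3)]], ![![(1,1),(1,2)], ![(2,1),(2,2)]]]]
    : Fin 2 → Fin 2 → Fin 2 → Fin 2 → Fin 4 × Fin 4) p.1.1 p.1.2 p.2.1 p.2.2

lemma g_bij : Function.Bijective g := by decide

lemma key (p : (Fin 2 × Fin 2) × Fin 2 × Fin 2) :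
    eU p.1.1 p.1.2 * eV p.2.1 p.2.2 = Matrix.single (g p).1 (g p).2 1 := by
  obtain ⟨⟨i, j⟩, k, l⟩ := p
  fin_cases i <;> fin_cases j <;> fin_cases k <;> fin_cases l <;>
    · rw [show ((⟨_, _⟩, ⟨_, _⟩) : (Fin 2 × Fin 2) × Fin 2 × Fin 2).1.1 = _ from rfl] at *
      rw [eU_ex, eV_ex]
      ext a b
      fin_cases a <;> fin_cases b <;>
        simp [g, Matrix.mul_apply, Fin.sum_univ_four, Matrix.single,
          Matrix.vecHead, Matrix.vecTail, Prod.ext_iff, Fin.ext_iff, val3']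

end Stmt7Aux

/-- The 16 products `e_u(i,j)·e_v(k,l)` form a linear basis of `M₄(ℂ)`, and they
are in bijection with the standard matrix units `e₄(α,β)` of `M₄(ℂ)`. -/
theorem stmt7 :
    LinearIndependent ℂ (fun p : (Fin 2 × Fin 2) × Fin 2 × Fin 2 =>
      eU p.1.1 p.1.2 * eV p.2.1 p.2.2) ∧
    Submodule.span ℂ (Set.range fun p : (Fin 2 × Fin 2) × Fin 2 × Fin 2 =>
      eU p.1.1 p.1.2 * eV p.2.1 p.2.2) = ⊤ ∧
    ∃ f : ((Fin 2 × Fin 2) × Fin 2 × Fin 2) ≃ Fin 4 × Fin 4,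
      ∀ p : (Fin 2 × Fin 2) × Fin 2 × Fin 2,
        eU p.1.1 p.1.2 * eV p.2.1 p.2.2 = Matrix.single (f p).1 (f p).2 1 := by
  let f : ((Fin 2 × Fin 2) × Fin 2 × Fin 2) ≃ Fin 4 × Fin 4 :=
    Equiv.ofBijective _ Stmt7Aux.g_bij
  have hf : ∀ p, (f p : Fin 4 × Fin 4) = Stmt7Aux.g p := fun _ => rfl
  let B : Module.Basis ((Fin 2 × Fin 2) × Fin 2 × Fin 2) ℂ (Matrix (Fin 4) (Fin 4) ℂ) :=
    (Matrix.stdBasis ℂ (Fin 4) (Fin 4)).reindex f.symm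
  have hB : ∀ p, B p = eU p.1.1 p.1.2 * eV p.2.1 p.2.2 := by
    intro p
    rw [Stmt7Aux.key p]
    have h1 : B p = Matrix.stdBasis ℂ (Fin 4) (Fin 4) (f p) := by
      simp [B, Module.Basis.reindex_apply]
    rw [h1, hf p, show Stmt7Aux.g p = ((Stmt7Aux.g p).1, (Stmt7Aux.g p).2) from rfl,
      Matrix.stdBasis_eq_single]
  have hBfun : (fun p : (Fin 2 × Fin 2) × Fin 2 × Fin 2 =>
      eU p.1.1 p.1.2 * eV p.2.1 p.2.2) = ⇑B := by
    funext p; rw [hB]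
  refine ⟨?_, ?_, ⟨f, fun p => by rw [Stmt7Aux.key p, hf]⟩⟩
  · rw [hBfun]; exact B.linearIndependent
  · rw [hBfun]; exact B.span_eq
end

section
/- Let G₁, G₂, G₃ be groups with subgroups H_{ij} ⊂ G_i as in a fillable triangle, and suppose G₃ is the free product of H_{13} and H_{23} amalgamated over H_{123} (with the given inclusion maps). Then the generalized free product of the triangle is realizable and equals G₁ ∗_{H_{12}} G₂; in particular the canonical maps G_i → G₁ ∗_{H_{12}} G₂ (for i = 1,2,3, the third induced by the amalgamated free product structure of G₃) are injective and the required diagrams commute. -/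
universe u

/-- A two-element family of groups indexed by `Bool`. -/
abbrev GPair (G₁ G₂ : Type u) : Bool → Type u
  | true => G₁
  | false => G₂

instance gPairGroup {G₁ G₂ : Type u} [Group G₁] [Group G₂] : ∀ b, Group (GPair G₁ G₂ b)
  | true => inferInstanceAs (Group G₁)
  | false => inferInstanceAs (Group G₂)

/-- The pair of embeddings of the amalgamated subgroup `H` into `G₁` and `G₂`. -/
def gPairHom {H G₁ G₂ : Type u} [Group H] [Group G₁] [Group G₂]
    (f₁ : H →* G₁) (f₂ : H →* G₂) : ∀ b, H →* GPair G₁ G₂ b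
  | true => f₁
  | false => f₂

/-- The amalgamated free product (pushout) `G₁ ∗_H G₂` of `G₁` and `G₂`
along `f₁ : H →* G₁`, `f₂ : H →* G₂`. -/
def Amalgam {H G₁ G₂ : Type u} [Group H] [Group G₁] [Group G₂]
    (f₁ : H →* G₁) (f₂ : H →* G₂) : Type u :=
  Monoid.PushoutI (gPairHom f₁ f₂)

noncomputable instance {H G₁ G₂ : Type u} [Group H] [Group G₁] [Group G₂]
    (f₁ : H →* G₁) (f₂ : H →* G₂) : Group (Amalgam f₁ f₂) :=
  inferInstanceAs (Group (Monoid.PushoutI (gPairHom f₁ f₂)))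

/-- The canonical map `G₁ →* G₁ ∗_H G₂`. -/
def Amalgam.inl {H G₁ G₂ : Type u} [Group H] [Group G₁] [Group G₂]
    (f₁ : H →* G₁) (f₂ : H →* G₂) : G₁ →* Amalgam f₁ f₂ :=
  Monoid.PushoutI.of (φ := gPairHom f₁ f₂) true

/-- The canonical map `G₂ →* G₁ ∗_H G₂`. -/
def Amalgam.inr {H G₁ G₂ : Type u} [Group H] [Group G₁] [Group G₂]
    (f₁ : H →* G₁) (f₂ : H →* G₂) : G₂ →* Amalgam f₁ f₂ :=
  Monoid.PushoutI.of (φ := gPairHom f₁ f₂) false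

open Monoid in
/-- Auxiliary: a reduced word in a pushout maps to a reduced word under a family of
homomorphisms that preserve non-membership in the base ranges. -/
lemma reduced_map_aux {ι H K : Type*} {M N : ι → Type*} [∀ i, Group (M i)] [∀ i, Group (N i)]
    [Group H] [Group K]
    (φs : ∀ i, H →* M i) (φb : ∀ i, K →* N i) (ψ : ∀ i, M i →* N i)
    (hψ : ∀ i (g : M i), g ∉ (φs i).range → ψ i g ∉ (φb i).range)
    (Φ : PushoutI φs →* PushoutI φb)
    (hΦ : ∀ i (g : M i), Φ (PushoutI.of i g) = PushoutI.of i (ψ i g))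
    (w : CoprodI.Word M) (hw : PushoutI.Reduced φs w) :
    ∃ w' : CoprodI.Word N, PushoutI.Reduced φb w' ∧
      w'.toList.map Sigma.fst = w.toList.map Sigma.fst ∧
      PushoutI.ofCoprodI w'.prod = Φ (PushoutI.ofCoprodI w.prod) := by
  classical
  induction w using CoprodI.Word.consRecOn with
  | empty => exact ⟨.empty, fun g hg => by simp [CoprodI.Word.empty] at hg, rfl, by simp⟩
  | cons i g w hIdx hg1 ih =>
    rcases ih (fun _ hg => hw _ (List.mem_cons_of_mem _ hg)) with ⟨w', hred, hmap, hprod⟩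
    have hgr : g ∉ (φs i).range := hw _ List.mem_cons_self
    have hψgr : ψ i g ∉ (φb i).range := hψ i g hgr
    have hψg1 : ψ i g ≠ 1 := fun h => hψgr (h ▸ one_mem _)
    have hIdx' : w'.fstIdx ≠ some i := by
      rwa [CoprodI.Word.fstIdx, ← List.head?_map, hmap, List.head?_map]
    refine ⟨CoprodI.Word.cons (ψ i g) w' hIdx' hψg1, ?_, ?_, ?_⟩
    · intro p hp
      simp only [CoprodI.Word.cons, List.mem_cons] at hp
      rcases hp with rfl | hp
      · exact hψgr
      · exact hred _ hp
    · simp [CoprodI.Word.cons, hmap]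
    · rw [CoprodI.Word.prod_cons, CoprodI.Word.prod_cons, map_mul, map_mul,
        PushoutI.ofCoprodI_of, PushoutI.ofCoprodI_of, map_mul, hΦ, hprod]

/-- Hanna Neumann's criterion: in a fillable triangle of groups
`(G₁,G₂,G₃;H₁₂,H₁₃,H₂₃;H₁₂₃)` in which the vertex group `G₃` is itself the
amalgamated free product `H₁₃ ∗_{H₁₂₃} H₂₃`, the generalized free product is
realizable and equals `G₁ ∗_{H₁₂} G₂`: the canonical maps of `G₁`, `G₂` and
`G₃ = H₁₃ ∗_{H₁₂₃} H₂₃` into `G₁ ∗_{H₁₂} G₂` are injective and the triangle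
diagrams commute. -/
theorem stmt8 {G₁ G₂ H₁₂ H₁₃ H₂₃ H₁₂₃ : Type u}
    [Group G₁] [Group G₂] [Group H₁₂] [Group H₁₃] [Group H₂₃] [Group H₁₂₃]
    (f₁ : H₁₂ →* G₁) (f₂ : H₁₂ →* G₂) (g₁ : H₁₃ →* G₁) (g₂ : H₂₃ →* G₂)
    (j₁₂ : H₁₂₃ →* H₁₂) (j₁₃ : H₁₂₃ →* H₁₃) (j₂₃ : H₁₂₃ →* H₂₃)
    (hf₁ : Function.Injective f₁) (hf₂ : Function.Injective f₂)
    (hg₁ : Function.Injective g₁) (hg₂ : Function.Injective g₂)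
    (hj₁₂ : Function.Injective j₁₂) (hj₁₃ : Function.Injective j₁₃)
    (hj₂₃ : Function.Injective j₂₃)
    (hcomm₁ : g₁.comp j₁₃ = f₁.comp j₁₂) (hcomm₂ : g₂.comp j₂₃ = f₂.comp j₁₂)
    (hfill₁ : f₁.range ⊓ g₁.range = (g₁.comp j₁₃).range)
    (hfill₂ : f₂.range ⊓ g₂.range = (g₂.comp j₂₃).range) :
    Function.Injective (Amalgam.inl f₁ f₂) ∧
    Function.Injective (Amalgam.inr f₁ f₂) ∧
    ∃ Φ : Amalgam j₁₃ j₂₃ →* Amalgam f₁ f₂,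
      Φ.comp (Amalgam.inl j₁₃ j₂₃) = (Amalgam.inl f₁ f₂).comp g₁ ∧
      Φ.comp (Amalgam.inr j₁₃ j₂₃) = (Amalgam.inr f₁ f₂).comp g₂ ∧
      Function.Injective Φ := by
  classical
  have hφb : ∀ b, Function.Injective (gPairHom f₁ f₂ b) := by
    intro b; cases b
    · exact hf₂
    · exact hf₁
  have hφs : ∀ b, Function.Injective (gPairHom j₁₃ j₂₃ b) := by
    intro b; cases b
    · exact hj₂₃
    · exact hj₁₃
  refine ⟨Monoid.PushoutI.of_injective hφb true, Monoid.PushoutI.of_injective hφb false, ?_⟩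
  let ψ : ∀ b, GPair H₁₃ H₂₃ b →* GPair G₁ G₂ b := fun b =>
    match b with
    | true => g₁
    | false => g₂
  have hψ : ∀ b (g : GPair H₁₃ H₂₃ b),
      g ∉ (gPairHom j₁₃ j₂₃ b).range → ψ b g ∉ (gPairHom f₁ f₂ b).range := by
    intro b; cases b
    · intro g hg hmem
      have h2 : g₂ g ∈ f₂.range ⊓ g₂.range := ⟨hmem, ⟨g, rfl⟩⟩
      rw [hfill₂] at h2
      obtain ⟨k, hk⟩ := h2
      exact hg ⟨k, hg₂ hk⟩
    · intro g hg hmem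
      have h2 : g₁ g ∈ f₁.range ⊓ g₁.range := ⟨hmem, ⟨g, rfl⟩⟩
      rw [hfill₁] at h2
      obtain ⟨k, hk⟩ := h2
      exact hg ⟨k, hg₁ hk⟩
  let F : ∀ b, GPair H₁₃ H₂₃ b →* Amalgam f₁ f₂ := fun b =>
    (Monoid.PushoutI.of (φ := gPairHom f₁ f₂) b).comp (ψ b)
  have hbase : ((Monoid.PushoutI.of (φ := gPairHom f₁ f₂) true).comp f₁) =
      ((Monoid.PushoutI.of (φ := gPairHom f₁ f₂) false).comp f₂) :=
    (Monoid.PushoutI.of_comp_eq_base (φ := gPairHom f₁ f₂) true).trans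
      (Monoid.PushoutI.of_comp_eq_base (φ := gPairHom f₁ f₂) false).symm
  have hFK : ∀ b, (F b).comp (gPairHom j₁₃ j₂₃ b) =
      ((Monoid.PushoutI.of (φ := gPairHom f₁ f₂) true).comp f₁).comp j₁₂ := by
    intro b; cases b
    · show ((Monoid.PushoutI.of (φ := gPairHom f₁ f₂) false).comp g₂).comp j₂₃ = _
      rw [MonoidHom.comp_assoc, hcomm₂, ← MonoidHom.comp_assoc, ← hbase]
    · show ((Monoid.PushoutI.of (φ := gPairHom f₁ f₂) true).comp g₁).comp j₁₃ = _
      rw [MonoidHom.comp_assoc, hcomm₁, ← MonoidHom.comp_assoc]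
  let Φ : Amalgam j₁₃ j₂₃ →* Amalgam f₁ f₂ :=
    Monoid.PushoutI.lift F (((Monoid.PushoutI.of (φ := gPairHom f₁ f₂) true).comp f₁).comp j₁₂) hFK
  have hΦof : ∀ b (g : GPair H₁₃ H₂₃ b),
      Φ (Monoid.PushoutI.of (φ := gPairHom j₁₃ j₂₃) b g) =
        Monoid.PushoutI.of (φ := gPairHom f₁ f₂) b (ψ b g) := by
    intro b g
    exact Monoid.PushoutI.lift_of F _ hFK g
  refine ⟨Φ, ?_, ?_, ?_⟩
  · ext x
    exact hΦof true x
  · ext x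
    exact hΦof false x
  · rw [injective_iff_map_eq_one]
    intro x hx
    obtain ⟨d⟩ := Monoid.PushoutI.NormalWord.transversal_nonempty (gPairHom j₁₃ j₂₃) hφs
    letI : ∀ b, DecidableEq (GPair H₁₃ H₂₃ b) := fun b => Classical.decEq _
    letI := @Monoid.PushoutI.NormalWord.mulAction Bool _ _ _ _ _ d instDecidableEqBool
      (fun b => Classical.decEq _)
    let x' : Monoid.PushoutI (gPairHom j₁₃ j₂₃) := x
    set w : Monoid.PushoutI.NormalWord d :=
      x' • (Monoid.PushoutI.NormalWord.empty : Monoid.PushoutI.NormalWord d) with hwdef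
    have hxw : x = w.prod := by
      rw [hwdef, @Monoid.PushoutI.NormalWord.prod_smul Bool _ _ _ _ _ d instDecidableEqBool
        (fun b => Classical.decEq _) x' _, Monoid.PushoutI.NormalWord.prod_empty, mul_one]
    have hred : Monoid.PushoutI.Reduced (gPairHom j₁₃ j₂₃) w.toWord := by
      rintro ⟨i, g⟩ hp hpr
      have hset : g ∈ d.set i := w.normalized i g hp
      have hne : g ≠ 1 := w.toWord.ne_one _ hp
      have h1 : (((d.compl i).equiv g).2 : GPair H₁₃ H₂₃ i) = g :=
        (Subgroup.IsComplement.equiv_snd_eq_self_iff_mem _ (one_mem _)).2 hset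
      have h2 : (((d.compl i).equiv g).2 : GPair H₁₃ H₂₃ i) = 1 :=
        (Subgroup.IsComplement.coe_equiv_snd_eq_one_iff_mem _ (d.one_mem i)).2 hpr
      rw [h1] at h2
      exact hne h2
    obtain ⟨w', hred', hmap', hprod'⟩ :=
      reduced_map_aux (gPairHom j₁₃ j₂₃) (gPairHom f₁ f₂) ψ hψ Φ hΦof w.toWord hred
    have hΦbase : ∀ h : H₁₂₃,
        Φ (Monoid.PushoutI.base (gPairHom j₁₃ j₂₃) h) =
          Monoid.PushoutI.base (gPairHom f₁ f₂) (j₁₂ h) := by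
      intro h
      rw [← Monoid.PushoutI.of_apply_eq_base (gPairHom j₁₃ j₂₃) true h, hΦof]
      have hc : ψ true (gPairHom j₁₃ j₂₃ true h) = gPairHom f₁ f₂ true (j₁₂ h) :=
        DFunLike.congr_fun hcomm₁ h
      rw [hc, Monoid.PushoutI.of_apply_eq_base (gPairHom f₁ f₂) true (j₁₂ h)]
    have hxprod : x = Monoid.PushoutI.base (gPairHom j₁₃ j₂₃) w.head *
        Monoid.PushoutI.ofCoprodI w.toWord.prod := hxw
    have key : (1 : Amalgam f₁ f₂) = Monoid.PushoutI.base (gPairHom f₁ f₂) (j₁₂ w.head) *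
        Monoid.PushoutI.ofCoprodI w'.prod :=
      calc (1 : Amalgam f₁ f₂) = Φ x := hx.symm
        _ = Φ (Monoid.PushoutI.base (gPairHom j₁₃ j₂₃) w.head) *
            Φ (Monoid.PushoutI.ofCoprodI w.toWord.prod) := by
              rw [hxprod]; exact Φ.map_mul _ _
        _ = _ := by
              rw [hΦbase]
              exact congrArg (fun y => Monoid.PushoutI.base (gPairHom f₁ f₂) (j₁₂ w.head) * y)
                hprod'.symm
    have hinv : Monoid.PushoutI.ofCoprodI w'.prod =
        (Monoid.PushoutI.base (gPairHom f₁ f₂) (j₁₂ w.head))⁻¹ :=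
      eq_inv_of_mul_eq_one_right key.symm
    have hmem : Monoid.PushoutI.ofCoprodI w'.prod ∈
        (Monoid.PushoutI.base (gPairHom f₁ f₂)).range := by
      refine ⟨(j₁₂ w.head)⁻¹, ?_⟩
      rw [map_inv]
      exact hinv.symm
    have hempty : w' = Monoid.CoprodI.Word.empty := hred'.eq_empty_of_mem_range hφb hmem
    have hnil : w.toWord.toList = [] := by
      have hm := hmap'
      rw [hempty] at hm
      have he : (Monoid.CoprodI.Word.empty :
          Monoid.CoprodI.Word (GPair G₁ G₂)).toList = [] := rfl
      rw [he] at hm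
      exact List.map_eq_nil_iff.mp hm.symm
    have hw'one : Monoid.PushoutI.ofCoprodI (φ := gPairHom f₁ f₂) w'.prod = 1 := by
      rw [hempty]
      simp
    have hwone : Monoid.PushoutI.base (gPairHom f₁ f₂) (j₁₂ w.head) = 1 := by
      rw [hw'one] at key
      exact (key.trans (mul_one _)).symm
    have hhead : w.head = 1 := by
      apply hj₁₂
      apply Monoid.PushoutI.base_injective hφb
      rw [hwone, map_one, map_one]
    have hwempty : w = Monoid.PushoutI.NormalWord.empty := by
      apply Monoid.PushoutI.NormalWord.ext
      · exact hhead
      · exact hnil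
    rw [hxw, hwempty, Monoid.PushoutI.NormalWord.prod_empty]
    rfl
end

section
/- Setting e_v(i,j) = v(e(i,j)⊗I₂)v and e_u(k,l) = u(e(k,l)⊗I₂)u in M_4(ℂ), the relation e_v(i,j)·e_u(k,l) = e_u(k,l)·e_v(σ(i),σ(j)) holds for all i,j,k,l ∈ {1,2} with k ≠ l, where σ swaps 1 and 2. -/
open Matrix

set_option maxHeartbeats 1000000 in
lemma eU00 : eU 0 0 = !![1,0,0,0; 0,0,0,0; 0,0,0,0; 0,0,0,1] := by
  rw [eU, tens_eq]; ext r c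
  fin_cases r <;> fin_cases c <;>
    simp [uMat, Matrix.mul_apply, Fin.sum_univ_four, Matrix.single, Matrix.one_apply,
      Matrix.vecHead, Matrix.vecTail, Function.comp]

set_option maxHeartbeats 1000000 in
lemma eU01 : eU 0 1 = !![0,0,1,0; 0,0,0,0; 0,0,0,0; 0,1,0,0] := by
  rw [eU, tens_eq]; ext r c
  fin_cases r <;> fin_cases c <;>
    simp [uMat, Matrix.mul_apply, Fin.sum_univ_four, Matrix.single, Matrix.one_apply,
      Matrix.vecHead, Matrix.vecTail, Function.comp]

set_option maxHeartbeats 1000000 in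
lemma eU10 : eU 1 0 = !![0,0,0,0; 0,0,0,1; 1,0,0,0; 0,0,0,0] := by
  rw [eU, tens_eq]; ext r c
  fin_cases r <;> fin_cases c <;>
    simp [uMat, Matrix.mul_apply, Fin.sum_univ_four, Matrix.single, Matrix.one_apply,
      Matrix.vecHead, Matrix.vecTail, Function.comp]

set_option maxHeartbeats 1000000 in
lemma eU11 : eU 1 1 = !![0,0,0,0; 0,1,0,0; 0,0,1,0; 0,0,0,0] := by
  rw [eU, tens_eq]; ext r c
  fin_cases r <;> fin_cases c <;>
    simp [uMat, Matrix.mul_apply, Fin.sum_univ_four, Matrix.single, Matrix.one_apply,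
      Matrix.vecHead, Matrix.vecTail, Function.comp]

set_option maxHeartbeats 1000000 in
lemma eV00 : eV 0 0 = !![1,0,0,0; 0,1,0,0; 0,0,0,0; 0,0,0,0] := by
  rw [eV, tens_eq]; ext r c
  fin_cases r <;> fin_cases c <;>
    simp [vMat, Matrix.mul_apply, Fin.sum_univ_four, Matrix.single, Matrix.one_apply,
      Matrix.vecHead, Matrix.vecTail, Function.comp]

set_option maxHeartbeats 1000000 in
lemma eV01 : eV 0 1 = !![0,0,0,1; 0,0,1,0; 0,0,0,0; 0,0,0,0] := by
  rw [eV, tens_eq]; ext r c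
  fin_cases r <;> fin_cases c <;>
    simp [vMat, Matrix.mul_apply, Fin.sum_univ_four, Matrix.single, Matrix.one_apply,
      Matrix.vecHead, Matrix.vecTail, Function.comp]

set_option maxHeartbeats 1000000 in
lemma eV10 : eV 1 0 = !![0,0,0,0; 0,0,0,0; 0,1,0,0; 1,0,0,0] := by
  rw [eV, tens_eq]; ext r c
  fin_cases r <;> fin_cases c <;>
    simp [vMat, Matrix.mul_apply, Fin.sum_univ_four, Matrix.single, Matrix.one_apply,
      Matrix.vecHead, Matrix.vecTail, Function.comp]

set_option maxHeartbeats 1000000 in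
lemma eV11 : eV 1 1 = !![0,0,0,0; 0,0,0,0; 0,0,1,0; 0,0,0,1] := by
  rw [eV, tens_eq]; ext r c
  fin_cases r <;> fin_cases c <;>
    simp [vMat, Matrix.mul_apply, Fin.sum_univ_four, Matrix.single, Matrix.one_apply,
      Matrix.vecHead, Matrix.vecTail, Function.comp]

set_option maxHeartbeats 2000000 in
/-- The relation `e_v(i,j)·e_u(k,l) = e_u(k,l)·e_v(σ(i),σ(j))` for all
`i,j,k,l ∈ {1,2}` with `k ≠ l`, where `σ` swaps `1` and `2`. -/
theorem stmt16 :
    ∀ i j k l : Fin 2, k ≠ l →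
      eV i j * eU k l = eU k l * eV (Equiv.swap 0 1 i) (Equiv.swap 0 1 j) := by
  intro i j k l h
  fin_cases i <;> fin_cases j <;> fin_cases k <;> fin_cases l <;>
    simp_all [eU00, eU01, eU10, eU11, eV00, eV01, eV10, eV11] <;>
    (ext r
     fin_cases r <;>
       simp [Matrix.mul_apply, Fin.sum_univ_four, Matrix.vecHead, Matrix.vecTail])
end
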